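/- arXiv:math/0211216 — 4 statements merged into one kernel-verified Lean document; each statement's English description precedes it below -/
import Mathlib

section
/- Let f(x) = ∑_{n ≥ 0} x^{2^n − 1} ∈ ℤ[[x]]. Then f(x) ≡ f(−x) · (1 + 2x·f(x)) modulo 4ℤ[[x]], i.e. every coefficient of f(x) − f(−x)(1 + 2x f(x)) is divisible by 4. -/
/-- `f(x) = ∑_{n ≥ 0} x^(2^n - 1) ∈ ℤ[[x]]`. -/
noncomputable def fSeries : PowerSeries ℤ := by
  classical
  exact PowerSeries.mk fun m => if ∃ n : ℕ, m + 1 = 2 ^ n then 1 else 0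

open scoped Classical in
lemma coeff_fSeries (m : ℕ) :
    PowerSeries.coeff (R := ℤ) m fSeries = if ∃ n : ℕ, m + 1 = 2 ^ n then 1 else 0 := by
  classical
  simp [fSeries]

/-- Symmetric sums in `ZMod 2` reduce to the diagonal term. -/
lemma sum_sym_zmod2 (k : ℕ) (b : ℕ → ZMod 2) :
    ∑ i ∈ Finset.range (k + 1), b i * b (k - i)
      = if 2 ∣ k then b (k / 2) * b (k / 2) else 0 := by
  classical
  rw [← Finset.sum_filter_add_sum_filter_not (Finset.range (k + 1)) (fun i => 2 * i = k)]
  have h1 : ∑ i ∈ (Finset.range (k + 1)).filter (fun i => 2 * i = k), b i * b (k - i)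
      = if 2 ∣ k then b (k / 2) * b (k / 2) else 0 := by
    by_cases hk : 2 ∣ k
    · obtain ⟨l, rfl⟩ := hk
      have : (Finset.range (2 * l + 1)).filter (fun i => 2 * i = 2 * l) = {l} := by
        ext i
        simp only [Finset.mem_filter, Finset.mem_range, Finset.mem_singleton]
        omega
      rw [this]
      simp only [Finset.sum_singleton]
      have hl : 2 * l - l = l := by omega
      have hl2 : 2 * l / 2 = l := by omega
      rw [hl, hl2, if_pos ⟨l, rfl⟩]
    · have : (Finset.range (k + 1)).filter (fun i => 2 * i = k) = ∅ := by
        ext i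
        simp only [Finset.mem_filter, Finset.mem_range, Finset.notMem_empty, iff_false]
        rintro ⟨-, rfl⟩
        exact hk ⟨i, rfl⟩
      rw [this, if_neg hk]
      simp
  have h2 : ∑ i ∈ (Finset.range (k + 1)).filter (fun i => ¬ 2 * i = k), b i * b (k - i) = 0 := by
    refine Finset.sum_involution (fun i _ => k - i) ?_ ?_ ?_ ?_
    · intro i hi
      simp only [Finset.mem_filter, Finset.mem_range] at hi
      have h : k - (k - i) = i := by omega
      rw [h]
      have : ∀ x : ZMod 2, x + x = 0 := by decide
      rw [mul_comm]
      exact this _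
    · intro i hi _
      simp only [Finset.mem_filter, Finset.mem_range] at hi
      show k - i ≠ i
      omega
    · intro i hi
      simp only [Finset.mem_filter, Finset.mem_range] at hi ⊢
      omega
    · intro i hi
      simp only [Finset.mem_filter, Finset.mem_range] at hi
      show k - (k - i) = i
      omega
  rw [h1, h2, add_zero]

open scoped Classical in
lemma key (k : ℕ) :
    (2 : ℤ) ∣ PowerSeries.coeff (R := ℤ) k (PowerSeries.rescale (-1 : ℤ) fSeries * fSeries)
      - (if 2 ∣ k then (if ∃ n : ℕ, k / 2 + 1 = 2 ^ n then 1 else 0) else 0) := by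
  classical
  suffices h : (((PowerSeries.coeff (R := ℤ) k (PowerSeries.rescale (-1 : ℤ) fSeries * fSeries)
      - (if 2 ∣ k then (if ∃ n : ℕ, k / 2 + 1 = 2 ^ n then 1 else 0) else 0) : ℤ)) : ZMod 2) = 0 by
    exact_mod_cast (ZMod.intCast_zmod_eq_zero_iff_dvd _ 2).mp h
  push_cast
  rw [sub_eq_zero]
  rw [PowerSeries.coeff_mul, Finset.Nat.sum_antidiagonal_eq_sum_range_succ_mk]
  push_cast
  have hcast : ∀ i j : ℕ,
      ((PowerSeries.coeff (R := ℤ) i (PowerSeries.rescale (-1 : ℤ) fSeries) : ℤ) : ZMod 2)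
        * ((PowerSeries.coeff (R := ℤ) j fSeries : ℤ) : ZMod 2)
      = ((PowerSeries.coeff (R := ℤ) i fSeries : ℤ) : ZMod 2)
        * ((PowerSeries.coeff (R := ℤ) j fSeries : ℤ) : ZMod 2) := by
    intro i j
    rw [PowerSeries.coeff_rescale]
    push_cast
    have h1 : ((-1 : ZMod 2)) = 1 := by decide
    rw [h1, one_pow, one_mul]
  calc (∑ i ∈ Finset.range (k + 1),
        ((PowerSeries.coeff (R := ℤ) i (PowerSeries.rescale (-1 : ℤ) fSeries) : ℤ) : ZMod 2)
          * ((PowerSeries.coeff (R := ℤ) (k - i) fSeries : ℤ) : ZMod 2))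
      = ∑ i ∈ Finset.range (k + 1),
        ((PowerSeries.coeff (R := ℤ) i fSeries : ℤ) : ZMod 2)
          * ((PowerSeries.coeff (R := ℤ) (k - i) fSeries : ℤ) : ZMod 2) := by
        exact Finset.sum_congr rfl fun i _ => hcast i (k - i)
    _ = if 2 ∣ k then ((PowerSeries.coeff (R := ℤ) (k / 2) fSeries : ℤ) : ZMod 2)
          * ((PowerSeries.coeff (R := ℤ) (k / 2) fSeries : ℤ) : ZMod 2) else 0 :=
        sum_sym_zmod2 k _
    _ = (if 2 ∣ k then (if ∃ n : ℕ, k / 2 + 1 = 2 ^ n then (1 : ZMod 2) else 0) else 0) := by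
        by_cases hk : 2 ∣ k
        · rw [if_pos hk, if_pos hk, coeff_fSeries]
          by_cases h : ∃ n : ℕ, k / 2 + 1 = 2 ^ n <;> simp [h]
        · simp [hk]

/-- `f(x) ≡ f(-x)·(1 + 2x·f(x))` modulo `4ℤ[[x]]`: every coefficient of
`f(x) - f(-x)(1 + 2x f(x))` is divisible by `4`. -/
theorem statement8 (m : ℕ) :
    (4 : ℤ) ∣ PowerSeries.coeff (R := ℤ) m
      (fSeries - PowerSeries.rescale (-1 : ℤ) fSeries
        * (1 + 2 * PowerSeries.X * fSeries)) := by
  classical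
  have hprod : PowerSeries.rescale (-1 : ℤ) fSeries * (1 + 2 * PowerSeries.X * fSeries)
      = PowerSeries.rescale (-1 : ℤ) fSeries
        + 2 * (PowerSeries.X * (PowerSeries.rescale (-1 : ℤ) fSeries * fSeries)) := by
    ring
  rw [map_sub, hprod, map_add]
  cases m with
  | zero =>
    rw [coeff_fSeries, PowerSeries.coeff_rescale, coeff_fSeries,
      show (2 : PowerSeries ℤ) * (PowerSeries.X * (PowerSeries.rescale (-1 : ℤ) fSeries * fSeries))
        = PowerSeries.C (R := ℤ) 2 * (PowerSeries.X * (PowerSeries.rescale (-1 : ℤ) fSeries * fSeries))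
        by norm_num,
      PowerSeries.coeff_C_mul, PowerSeries.coeff_zero_X_mul]
    rw [if_pos ⟨0, rfl⟩]
    norm_num
  | succ k =>
    have hX : PowerSeries.coeff (R := ℤ) (k + 1)
        (2 * (PowerSeries.X * (PowerSeries.rescale (-1 : ℤ) fSeries * fSeries)))
        = 2 * PowerSeries.coeff (R := ℤ) k (PowerSeries.rescale (-1 : ℤ) fSeries * fSeries) := by
      rw [show (2 : PowerSeries ℤ) * (PowerSeries.X * (PowerSeries.rescale (-1 : ℤ) fSeries * fSeries))
          = PowerSeries.C (R := ℤ) 2 * (PowerSeries.X * (PowerSeries.rescale (-1 : ℤ) fSeries * fSeries)) by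
          norm_num]
      rw [PowerSeries.coeff_C_mul, PowerSeries.coeff_succ_X_mul]
    rw [hX, PowerSeries.coeff_rescale]
    set a : ℕ → ℤ := fun m => if ∃ n : ℕ, m + 1 = 2 ^ n then 1 else 0 with ha
    have hco : ∀ m, PowerSeries.coeff (R := ℤ) m fSeries = a m := coeff_fSeries
    set C : ℤ := PowerSeries.coeff (R := ℤ) k (PowerSeries.rescale (-1 : ℤ) fSeries * fSeries) with hC
    rw [hco]
    rcases Nat.even_or_odd k with hk | hk
    · -- k even, m = k+1 odd
      obtain ⟨l, rfl⟩ := hk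
      have hdvd : 2 ∣ l + l := ⟨l, by ring⟩
      have hdiv : (l + l) / 2 = l := by omega
      have hkey := key (l + l)
      rw [if_pos hdvd, hdiv] at hkey
      have hneg : ((-1 : ℤ)) ^ (l + l + 1) = -1 := by
        rw [show l + l + 1 = 2 * l + 1 by ring, pow_succ, pow_mul]
        norm_num
      rw [hneg]
      have haeq : a (l + l + 1) = (if ∃ n : ℕ, l + 1 = 2 ^ n then (1 : ℤ) else 0) := by
        rw [ha]
        simp only
        congr 1
        apply propext
        constructor
        · rintro ⟨n, hn⟩
          cases n with
          | zero => omega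
          | succ n' =>
            refine ⟨n', ?_⟩
            rw [pow_succ] at hn
            omega
        · rintro ⟨n, hn⟩
          exact ⟨n + 1, by rw [pow_succ]; omega⟩
      obtain ⟨d, hd⟩ := hkey
      rw [haeq]
      refine ⟨-d, ?_⟩
      have : C - (if ∃ n : ℕ, l + 1 = 2 ^ n then (1 : ℤ) else 0) = 2 * d := hd
      linarith
    · -- k odd, m = k+1 even
      obtain ⟨l, rfl⟩ := hk
      have hndvd : ¬ 2 ∣ 2 * l + 1 := by omega
      have hkey := key (2 * l + 1)
      rw [if_neg hndvd, sub_zero] at hkey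
      have hneg : ((-1 : ℤ)) ^ (2 * l + 1 + 1) = 1 := by
        rw [show 2 * l + 1 + 1 = 2 * (l + 1) by ring, pow_mul]
        norm_num
      rw [hneg, one_mul]
      obtain ⟨d, hd⟩ := hkey
      rw [← hC] at hd
      refine ⟨-d, ?_⟩
      linarith
end

section
/- Let f(x) = ∑_{n ≥ 0} x^{2^n − 1} ∈ ℤ[[x]] and e(x) = 1 + 2x·f(x) = 1 + 2∑_{n ≥ 0} x^{2^n}. Then e(x+y) ≡ e(x)·e(y) modulo 4ℤ[[x,y]]. -/
/-- `e(x) = 1 + 2∑_{n ≥ 0} x^(2^n)` as a power series in the two variables `x, y`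
(the variable `y = X 1` does not occur). -/
noncomputable def eX : MvPowerSeries (Fin 2) ℤ := by
  classical
  exact fun d => if d 1 = 0 ∧ ∃ n : ℕ, d 0 = 2 ^ n then 2 else if d = 0 then 1 else 0

/-- `e(y) = 1 + 2∑_{n ≥ 0} y^(2^n)` as a power series in the two variables `x, y`. -/
noncomputable def eY : MvPowerSeries (Fin 2) ℤ := by
  classical
  exact fun d => if d 0 = 0 ∧ ∃ n : ℕ, d 1 = 2 ^ n then 2 else if d = 0 then 1 else 0

/-- `e(x+y) = 1 + 2∑_{n ≥ 0} (x+y)^(2^n)`: by the binomial theorem, the coefficient of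
`x^i y^j` (for `(i,j) ≠ (0,0)`) is `2·C(i+j, i)` if `i + j` is a power of `2`, and `0`
otherwise. -/
noncomputable def eXY : MvPowerSeries (Fin 2) ℤ := by
  classical
  exact fun d =>
    if d = 0 then 1
    else if ∃ n : ℕ, d 0 + d 1 = 2 ^ n then 2 * ((d 0 + d 1).choose (d 0) : ℤ) else 0

noncomputable def auxU : MvPowerSeries (Fin 2) ℤ := by
  classical
  exact fun d => if d 1 = 0 ∧ ∃ n : ℕ, d 0 = 2 ^ n then 1 else 0

noncomputable def auxV : MvPowerSeries (Fin 2) ℤ := by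
  classical
  exact fun d => if d 0 = 0 ∧ ∃ n : ℕ, d 1 = 2 ^ n then 1 else 0

noncomputable def auxW : MvPowerSeries (Fin 2) ℤ := by
  classical
  exact fun d =>
    if d ≠ 0 ∧ ∃ n : ℕ, d 0 + d 1 = 2 ^ n then ((d 0 + d 1).choose (d 0) : ℤ) else 0

lemma coeff_apply' (f : MvPowerSeries (Fin 2) ℤ) (d : Fin 2 →₀ ℕ) :
    MvPowerSeries.coeff d f = f d := rfl

lemma hXeq : eX = 1 + MvPowerSeries.C (σ := Fin 2) (R := ℤ) 2 * auxU := by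
  ext d
  rw [map_add, MvPowerSeries.coeff_C_mul, MvPowerSeries.coeff_one,
    coeff_apply' eX, coeff_apply' auxU, eX, auxU]
  split_ifs with h1 h2 h2
  · exfalso
    obtain ⟨hd1, n, hn⟩ := h1
    have : d 0 = 0 := by rw [h2]; rfl
    simp [this] at hn
    exact absurd hn.symm (pow_ne_zero n two_ne_zero)
  · ring
  · ring
  · ring

lemma hYeq : eY = 1 + MvPowerSeries.C (σ := Fin 2) (R := ℤ) 2 * auxV := by
  ext d
  rw [map_add, MvPowerSeries.coeff_C_mul, MvPowerSeries.coeff_one,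
    coeff_apply' eY, coeff_apply' auxV, eY, auxV]
  split_ifs with h1 h2 h2
  · exfalso
    obtain ⟨hd0, n, hn⟩ := h1
    have : d 1 = 0 := by rw [h2]; rfl
    simp [this] at hn
    exact absurd hn.symm (pow_ne_zero n two_ne_zero)
  · ring
  · ring
  · ring

lemma hXYeq : eXY = 1 + MvPowerSeries.C (σ := Fin 2) (R := ℤ) 2 * auxW := by
  ext d
  rw [map_add, MvPowerSeries.coeff_C_mul, MvPowerSeries.coeff_one,
    coeff_apply' eXY, coeff_apply' auxW, eXY, auxW]
  by_cases h0 : d = 0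
  · simp [h0]
  · by_cases hp : ∃ n : ℕ, d 0 + d 1 = 2 ^ n
    · simp [h0, hp]
    · simp [h0, hp]

/-- `e(x+y) ≡ e(x)·e(y)` modulo `4ℤ[[x,y]]`: every coefficient of
`e(x+y) - e(x)e(y)` is divisible by `4`. -/
theorem statement9 (d : Fin 2 →₀ ℕ) :
    (4 : ℤ) ∣ MvPowerSeries.coeff d (eXY - eX * eY) := by
  classical
  have key : eXY - eX * eY =
      MvPowerSeries.C (σ := Fin 2) (R := ℤ) 2 * (auxW - auxU - auxV) -
      MvPowerSeries.C (σ := Fin 2) (R := ℤ) 2 * (MvPowerSeries.C (σ := Fin 2) (R := ℤ) 2 * (auxU * auxV)) := by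
    rw [hXeq, hYeq, hXYeq]; ring
  rw [key, map_sub, MvPowerSeries.coeff_C_mul, MvPowerSeries.coeff_C_mul,
    MvPowerSeries.coeff_C_mul, map_sub, map_sub]
  have h2 : (2 : ℤ) ∣ MvPowerSeries.coeff d auxW - MvPowerSeries.coeff d auxU -
      MvPowerSeries.coeff d auxV := by
    rw [coeff_apply' auxW, coeff_apply' auxU, coeff_apply' auxV, auxW, auxU, auxV]
    by_cases h0 : d = 0
    · have hd0 : d 0 = 0 := by rw [h0]; rfl
      have hd1 : d 1 = 0 := by rw [h0]; rfl
      have hnx : ¬ ∃ n : ℕ, (0 : ℕ) = 2 ^ n := by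
        rintro ⟨n, hn⟩; exact (pow_ne_zero n two_ne_zero) hn.symm
      simp [h0, hnx]
    · by_cases hp : ∃ n : ℕ, d 0 + d 1 = 2 ^ n
      · obtain ⟨n, hn⟩ := hp
        by_cases hi : d 0 = 0
        · -- then d 1 = 2 ^ n, W = choose = 1, U = 0, V = 1
          have hj : d 1 = 2 ^ n := by omega
          have hj0 : d 1 ≠ 0 := by rw [hj]; exact pow_ne_zero n two_ne_zero
          have hU : ¬ (d 1 = 0 ∧ ∃ m : ℕ, d 0 = 2 ^ m) := fun h => hj0 h.1
          simp [h0, hi, hj, hU, hn, hj0, Nat.choose_zero_right]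
        · by_cases hj : d 1 = 0
          · have hi' : d 0 = 2 ^ n := by omega
            have hU : d 1 = 0 ∧ ∃ m : ℕ, d 0 = 2 ^ m := ⟨hj, n, hi'⟩
            simp [h0, hi, hj, hU, hn, hj, Nat.choose_self]
          · -- middle case: choose is even
            have hV : ¬ (d 0 = 0 ∧ ∃ m : ℕ, d 1 = 2 ^ m) := fun h => hi h.1
            have hU : ¬ (d 1 = 0 ∧ ∃ m : ℕ, d 0 = 2 ^ m) := fun h => hj h.1
            have hlt : d 0 ≠ 2 ^ n := by omega
            have hdvd : (2 : ℕ) ∣ (2 ^ n).choose (d 0) :=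
              Nat.Prime.dvd_choose_pow Nat.prime_two hi hlt
            have : (2 : ℤ) ∣ ((2 ^ n).choose (d 0) : ℤ) := Int.natCast_dvd_natCast.mpr hdvd
            rw [if_pos ⟨h0, n, hn⟩, if_neg hU, if_neg hV, hn]
            simpa using this
      · have hU : ¬ (d 1 = 0 ∧ ∃ m : ℕ, d 0 = 2 ^ m) := by
          rintro ⟨hj, m, hm⟩; exact hp ⟨m, by omega⟩
        have hV : ¬ (d 0 = 0 ∧ ∃ m : ℕ, d 1 = 2 ^ m) := by
          rintro ⟨hi, m, hm⟩; exact hp ⟨m, by omega⟩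
        have hW : ¬ (d ≠ 0 ∧ ∃ n : ℕ, d 0 + d 1 = 2 ^ n) := fun h => hp h.2
        simp [hU, hV, hW]
  obtain ⟨k, hk⟩ := h2
  exact ⟨k - MvPowerSeries.coeff d (auxU * auxV), by rw [hk]; ring⟩
end

section
/- The formal power series √(1 + 4x) ∈ ℚ[[x]] (the unique power series with constant term 1 whose square is 1 + 4x) has integer coefficients. -/
open PowerSeries Finset

/-- The formal power series `√(1 + 4x) ∈ ℚ[[x]]` — the unique power series
with constant term `1` whose square is `1 + 4x` — has integer coefficients. -/
theorem statement11 (g : PowerSeries ℚ)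
    (hg1 : PowerSeries.constantCoeff g = 1)
    (hg2 : g ^ 2 = 1 + 4 * PowerSeries.X) :
    ∀ m : ℕ, ∃ n : ℤ, PowerSeries.coeff m g = (n : ℚ) := by
  set S := (Int.castRingHom ℚ).range with hSdef
  have ha0 : PowerSeries.coeff 0 g = 1 := by
    rwa [PowerSeries.coeff_zero_eq_constantCoeff]
  have hcoeff : ∀ m : ℕ, ∑ i ∈ Finset.range (m+1),
      PowerSeries.coeff i g * PowerSeries.coeff (m - i) g
      = PowerSeries.coeff m (1 + 4 * PowerSeries.X) := by
    intro m
    rw [← Finset.Nat.sum_antidiagonal_eq_sum_range_succ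
        (fun i j => PowerSeries.coeff i g * PowerSeries.coeff j g),
      ← PowerSeries.coeff_mul, ← pow_two, hg2]
  have hR : ∀ m : ℕ, PowerSeries.coeff m (1 + 4 * PowerSeries.X : PowerSeries ℚ)
      = if m = 0 then 1 else if m = 1 then 4 else 0 := by
    intro m
    rw [show (4 : PowerSeries ℚ) = PowerSeries.C 4 from (map_ofNat PowerSeries.C 4).symm]
    rcases Nat.lt_or_ge m 2 with h | h
    · interval_cases m <;> simp
    · rw [if_neg (by omega), if_neg (by omega)]
      simp [PowerSeries.coeff_one, PowerSeries.coeff_C_mul, PowerSeries.coeff_X,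
        (by omega : m ≠ 0), (by omega : m ≠ 1)]
      rw [if_neg (by omega), if_neg (by omega)]
      ring
  have key : ∀ m : ℕ, 1 ≤ m → PowerSeries.coeff m g / 2 ∈ S := by
    intro m
    induction m using Nat.strong_induction_on with
    | _ m IH =>
      intro hm
      match m, hm with
      | 1, _ =>
        have h := hcoeff 1
        rw [hR] at h
        simp [Finset.sum_range_succ, ha0] at h
        have : PowerSeries.coeff 1 g = 2 := by linarith
        rw [this]
        exact ⟨1, by norm_num⟩
      | (k+2), _ =>
        have h := hcoeff (k+2)
        rw [Finset.sum_range_succ, Finset.sum_range_succ'] at h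
        simp only [Nat.sub_zero, Nat.sub_self, ha0, one_mul, mul_one] at h
        rw [hR] at h
        simp only [Nat.add_eq_zero, OfNat.ofNat_ne_zero, and_false, if_false,
          Nat.add_right_cancel_iff] at h
        rw [if_neg (by omega)] at h
        -- h : (∑ i ∈ range (k+1), a(i+1) * a(k+2-(i+1)) + a(k+2)) + a(k+2) = 0
        have hsum : (∑ i ∈ Finset.range (k+1),
            PowerSeries.coeff (i+1) g * PowerSeries.coeff (k+2-(i+1)) g) / 4 ∈ S := by
          rw [Finset.sum_div]
          apply Subring.sum_mem
          intro i hi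
          have hi' : i < k + 1 := Finset.mem_range.mp hi
          have h1 : PowerSeries.coeff (i+1) g / 2 ∈ S :=
            IH (i+1) (by omega) (by omega)
          have h2 : PowerSeries.coeff (k+2-(i+1)) g / 2 ∈ S :=
            IH (k+2-(i+1)) (by omega) (by omega)
          have : PowerSeries.coeff (i+1) g * PowerSeries.coeff (k+2-(i+1)) g / 4
              = (PowerSeries.coeff (i+1) g / 2) * (PowerSeries.coeff (k+2-(i+1)) g / 2) := by
            ring
          rw [this]
          exact Subring.mul_mem _ h1 h2
        have heq : PowerSeries.coeff (k+2) g / 2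
            = -((∑ i ∈ Finset.range (k+1),
            PowerSeries.coeff (i+1) g * PowerSeries.coeff (k+2-(i+1)) g) / 4) := by
          linarith
        rw [heq]
        exact Subring.neg_mem _ hsum
  intro m
  match m with
  | 0 => exact ⟨1, by simp [ha0]⟩
  | (k+1) =>
    obtain ⟨n, hn⟩ := key (k+1) (by omega)
    refine ⟨2*n, ?_⟩
    simp only [Int.coe_castRingHom] at hn
    push_cast
    linarith
end

section
/- In the ring R = (ℤ/2)[[α]][ε]/(ε²), with f(t) = ∑_{n ≥ 0} t^{2^n − 1}, one has f(α + ε) = f(α) + ε · f(α)². Consequently f(α+ε)/((1+ε)·f(α)) = 1 + ε·∑_{n ≥ 1} α^{2^n − 1}. -/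
open PowerSeries DualNumber

/-- The ring `R = (ℤ/2)[[α]][ε]/(ε²)`, realized as power series in `α` over the dual
numbers `(ℤ/2)[ε]`. -/
abbrev Rring : Type := PowerSeries (DualNumber (ZMod 2))

/-- `f(α) = ∑_{n ≥ 0} α^(2^n - 1)` in `R`. -/
noncomputable def fAlpha : Rring := by
  classical
  exact PowerSeries.mk fun m => if ∃ n : ℕ, m + 1 = 2 ^ n then 1 else 0

/-- `∑_{n ≥ 1} α^(2^n - 1)` in `R`. -/
noncomputable def fAlphaTail : Rring := by
  classical
  exact PowerSeries.mk fun m => if ∃ n : ℕ, m + 1 = 2 ^ (n + 1) then 1 else 0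

namespace St13

open Finset
open scoped Classical

noncomputable abbrev E : Rring :=
  PowerSeries.C (DualNumber.eps : DualNumber (ZMod 2))

instance : CharP (DualNumber (ZMod 2)) 2 :=
  charP_of_injective_ringHom (R := ZMod 2)
    (f := TrivSqZeroExt.inlHom (ZMod 2) (ZMod 2)) TrivSqZeroExt.inl_injective 2

instance : CharP Rring 2 :=
  charP_of_injective_ringHom (f := (PowerSeries.C (R := DualNumber (ZMod 2)))) PowerSeries.C_injective 2

lemma hE2 : E * E = 0 := by
  rw [← map_mul, DualNumber.eps_mul_eps, map_zero]

lemma sm1 : StrictMono (fun n : ℕ => 2 ^ n - 1) := by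
  apply strictMono_nat_of_lt_succ
  intro n
  have h1 : (1:ℕ) ≤ 2 ^ n := Nat.one_le_two_pow
  have h2 : 2 ^ (n+1) = 2 ^ n + 2 ^ n := by ring
  omega

lemma sm2 : StrictMono (fun n : ℕ => 2 ^ (n+1) - 2) := by
  apply strictMono_nat_of_lt_succ
  intro n
  have h1 : (1:ℕ) ≤ 2 ^ (n+1) := Nat.one_le_two_pow
  have h2 : 2 ^ (n+2) = 2 ^ (n+1) + 2 ^ (n+1) := by ring
  omega

lemma keypow (n : ℕ) :
    (X + E) ^ (2 ^ (n+1) - 1) = X ^ (2 ^ (n+1) - 1) + E * X ^ (2 ^ (n+1) - 2) := by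
  induction n with
  | zero => norm_num
  | succ n ih =>
    have h1 : (1:ℕ) ≤ 2 ^ (n+1) := Nat.one_le_two_pow
    have h2 : 2 ^ (n+2) = 2 ^ (n+1) + 2 ^ (n+1) := by ring
    have e1 : 2 ^ (n+2) - 1 = 2 ^ (n+1) + (2 ^ (n+1) - 1) := by omega
    have e3 : 2 ^ (n+1) + (2 ^ (n+1) - 1) = 2 ^ (n+2) - 1 := by omega
    have e4 : 2 ^ (n+1) + (2 ^ (n+1) - 2) = 2 ^ (n+2) - 2 := by omega
    have e2 : (X + E) ^ (2 ^ (n+1)) = X ^ (2 ^ (n+1)) := by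
      rw [add_pow_char_pow]
      have hz : E ^ (2 ^ (n+1)) = 0 := by
        have h5 : 2 ^ (n+1) = 2 + (2 ^ (n+1) - 2) := by omega
        rw [h5, pow_add, pow_two, hE2, zero_mul]
      rw [hz, add_zero]
    calc (X + E) ^ (2 ^ (n+2) - 1)
        = (X + E) ^ (2 ^ (n+1)) * (X + E) ^ (2 ^ (n+1) - 1) := by rw [← pow_add, ← e1]
      _ = X ^ (2 ^ (n+1)) * (X ^ (2 ^ (n+1) - 1) + E * X ^ (2 ^ (n+1) - 2)) := by rw [e2, ih]
      _ = X ^ (2 ^ (n+1) + (2 ^ (n+1) - 1)) + E * X ^ (2 ^ (n+1) + (2 ^ (n+1) - 2)) := by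
          rw [mul_add, ← pow_add, mul_left_comm, ← pow_add]
      _ = X ^ (2 ^ (n+2) - 1) + E * X ^ (2 ^ (n+2) - 2) := by rw [e3, e4]

lemma partial_sum (M : ℕ) :
    (∑ n ∈ range (M+1), (X + E) ^ (2 ^ n - 1))
      = (∑ n ∈ range (M+1), X ^ (2 ^ n - 1)) + E * ∑ n ∈ range M, X ^ (2 ^ (n+1) - 2) := by
  induction M with
  | zero => simp
  | succ M ih =>
    rw [Finset.sum_range_succ, ih, keypow,
      Finset.sum_range_succ (fun n => (X : Rring) ^ (2 ^ n - 1)) (M+1),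
      Finset.sum_range_succ (fun n => (X : Rring) ^ (2 ^ (n+1) - 2)) M]
    ring

lemma coeff_sum (k : ℕ → ℕ) (hk : StrictMono k) (M m : ℕ) (hM : m < k M) :
    (PowerSeries.coeff (R := DualNumber (ZMod 2)) m (∑ n ∈ range M, X ^ (k n)))
      = if ∃ n, m = k n then 1 else 0 := by
  rw [map_sum]
  simp_rw [coeff_X_pow]
  by_cases h : ∃ n, m = k n
  · obtain ⟨n, rfl⟩ := h
    have hex : ∃ j, k n = k j := ⟨n, rfl⟩
    have hn : n < M := by
      by_contra hc
      push_neg at hc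
      exact absurd hM (not_lt.mpr (hk.monotone hc))
    rw [if_pos hex, Finset.sum_eq_single_of_mem n (Finset.mem_range.mpr hn)]
    · exact if_pos rfl
    · intro j hj hne
      exact if_neg fun h => hne (hk.injective h).symm
  · rw [if_neg h]
    exact Finset.sum_eq_zero fun j hj => if_neg fun hc => h ⟨j, hc⟩

lemma coeff_fA (m : ℕ) :
    PowerSeries.coeff (R := DualNumber (ZMod 2)) m fAlpha
      = if ∃ n, m = 2 ^ n - 1 then 1 else 0 := by
  have hiff : (∃ n : ℕ, m + 1 = 2 ^ n) ↔ (∃ n : ℕ, m = 2 ^ n - 1) :=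
    exists_congr fun n => by have : (1:ℕ) ≤ 2 ^ n := Nat.one_le_two_pow; omega
  simp only [fAlpha, coeff_mk]
  exact if_congr hiff rfl rfl

lemma coeff_fA_sq (m : ℕ) :
    PowerSeries.coeff (R := DualNumber (ZMod 2)) m (fAlpha ^ 2)
      = if ∃ n, m = 2 ^ (n+1) - 2 then 1 else 0 := by
  have hbig : m + 2 < 2 ^ (m + 2) := Nat.lt_two_pow_self
  have htrunc : ∀ i ≤ m, PowerSeries.coeff i fAlpha
      = PowerSeries.coeff i (∑ n ∈ range (m+2), X ^ (2 ^ n - 1)) := by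
    intro i hi
    rw [coeff_fA, coeff_sum _ sm1 (m+2) i (by omega)]
  have h2 : PowerSeries.coeff m (fAlpha ^ 2)
      = PowerSeries.coeff m
          ((∑ n ∈ range (m+2), X ^ (2 ^ n - 1)) ^ 2) := by
    rw [pow_two, pow_two, coeff_mul, coeff_mul]
    apply Finset.sum_congr rfl
    intro p hp
    rw [Finset.HasAntidiagonal.mem_antidiagonal] at hp
    rw [htrunc p.1 (by omega), htrunc p.2 (by omega)]
  have h3 : (∑ n ∈ range (m+2), (X : Rring) ^ (2 ^ n - 1)) ^ 2
      = ∑ n ∈ range (m+2), (X : Rring) ^ (2 ^ (n+1) - 2) := by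
    rw [sum_pow_char]
    apply Finset.sum_congr rfl
    intro n _
    rw [← pow_mul]
    congr 1
    have h1 : (1:ℕ) ≤ 2 ^ n := Nat.one_le_two_pow
    have hh : 2 ^ (n+1) = 2 ^ n + 2 ^ n := by ring
    omega
  have hbnd : m < 2 ^ (m + 2 + 1) - 2 := by
    have hle : (2:ℕ) ^ (m+2) ≤ 2 ^ (m+3) := Nat.pow_le_pow_right (by norm_num) (by omega)
    omega
  rw [h2, h3, coeff_sum _ sm2 (m+2) m hbnd]

lemma fA_eq : fAlpha = 1 + fAlphaTail := by
  refine PowerSeries.ext fun m => ?_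
  rw [map_add]
  simp only [fAlpha, fAlphaTail, coeff_mk, PowerSeries.coeff_one]
  rcases m with _ | m
  · rw [if_pos ⟨0, rfl⟩, if_pos rfl, if_neg]
    · norm_num
    · rintro ⟨n, h⟩
      have h1 : (1:ℕ) ≤ 2 ^ n := Nat.one_le_two_pow
      have hh : (2:ℕ) ^ (n+1) = 2 ^ n + 2 ^ n := by ring
      omega
  · have hiff : (∃ n : ℕ, m + 1 + 1 = 2 ^ n) ↔ (∃ n : ℕ, m + 1 + 1 = 2 ^ (n+1)) := by
      constructor
      · rintro ⟨n, h⟩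
        match n with
        | 0 => omega
        | n+1 => exact ⟨n, h⟩
      · rintro ⟨n, h⟩
        exact ⟨n+1, h⟩
    rw [if_neg (Nat.succ_ne_zero m), zero_add]
    exact if_congr hiff rfl rfl

end St13

open St13 Finset in
/-- In `R = (ℤ/2)[[α]][ε]/(ε²)`, with `f(t) = ∑_{n ≥ 0} t^(2^n - 1)`, one
has `f(α + ε) = f(α) + ε·f(α)²`, and consequently
`f(α+ε)/((1+ε)·f(α)) = 1 + ε·∑_{n ≥ 1} α^(2^n - 1)`.  Here `F = f(α + ε)` is the infinite
sum `∑_{n ≥ 0} (α + ε)^(2^n - 1)`, characterized by the fact that each of its coefficients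
is the (eventually constant) limit of the coefficients of the partial sums. -/
theorem statement13 (F : Rring)
    (hF : ∀ m : ℕ, ∃ N₀ : ℕ, ∀ N ≥ N₀,
      PowerSeries.coeff m F
        = PowerSeries.coeff m
            (∑ n ∈ Finset.range N,
              (PowerSeries.X + PowerSeries.C (DualNumber.eps : DualNumber (ZMod 2)))
                ^ (2 ^ n - 1))) :
    F = fAlpha + PowerSeries.C (DualNumber.eps : DualNumber (ZMod 2)) * fAlpha ^ 2 ∧
    F = (1 + PowerSeries.C (DualNumber.eps : DualNumber (ZMod 2))) * fAlpha
          * (1 + PowerSeries.C (DualNumber.eps : DualNumber (ZMod 2)) * fAlphaTail) := by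
  have h1 : F = fAlpha + E * fAlpha ^ 2 := by
    refine PowerSeries.ext fun m => ?_
    obtain ⟨N₀, hN⟩ := hF m
    set N := max N₀ (m + 2) with hNdef
    have hNge : N ≥ N₀ := le_max_left _ _
    have hNm : m + 2 ≤ N := le_max_right _ _
    obtain ⟨M, hM⟩ : ∃ M, N = M + 1 := ⟨N - 1, by omega⟩
    have hpow : (2:ℕ) ^ (m+2) ≤ 2 ^ (M+1) := Nat.pow_le_pow_right (by norm_num) (by omega)
    have hbig : m + 2 < 2 ^ (m+2) := Nat.lt_two_pow_self
    rw [hN N hNge, hM, partial_sum M, map_add, map_add, PowerSeries.coeff_C_mul,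
      coeff_sum _ sm1 (M+1) m (by omega), coeff_sum _ sm2 M m (by omega),
      PowerSeries.coeff_C_mul, coeff_fA, coeff_fA_sq]
  refine ⟨h1, ?_⟩
  rw [h1, fA_eq]
  have h2 := hE2
  linear_combination (-(fAlphaTail * (1 + fAlphaTail))) * h2
end
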